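/- Let s > 0, let c_U, y₀ be real numbers with (1 − 1/s)² − 4c_U/s > 0, set Ξ = √((1 − 1/s)² − 4c_U/s), and assume |2y₀ − (1 − 1/s)| < Ξ. Let t₁ < t₂, let Ψ : ℝ → ℝ be a continuous function with Ψ(t) ≤ c_U for all t ∈ [t₁, t₂], and let y : ℝ → ℝ be differentiable on [t₁, t₂] with y(t₁) = y₀ and y′(t) = (s − 1)·y(t) − s·y(t)² − Ψ(t) for all t ∈ [t₁, t₂]. Then y(t) ≥ T(t − t₁ | y₀, s, c_U) for all t ∈ [t₁, t₂], where T is the tanh-formula with parameters (y₀, s, c_U). -/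

import Mathlib

/-- The real inverse hyperbolic tangent, `arctanh x = ½ log((1+x)/(1-x))`,
defined for `x ∈ (-1, 1)`. -/
noncomputable def arctanh (x : ℝ) : ℝ := (1 / 2) * Real.log ((1 + x) / (1 - x))

/-- The tanh-formula `T(t | y₀, s, c)`. -/
noncomputable def tanhFormula (y₀ s c t : ℝ) : ℝ :=
  (1 / 2) * (1 - 1 / s) +
    (Real.sqrt ((1 - 1 / s) ^ 2 - 4 * c / s) / 2) *
      Real.tanh ((s * Real.sqrt ((1 - 1 / s) ^ 2 - 4 * c / s) / 2) * t +
        arctanh ((2 * y₀ - (1 - 1 / s)) / Real.sqrt ((1 - 1 / s) ^ 2 - 4 * c / s)))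

open Real Set

lemma my_hasDerivAt_tanh (x : ℝ) : HasDerivAt Real.tanh (1 - Real.tanh x ^ 2) x := by
  have hc := (Real.cosh_pos x).ne'
  have h := (Real.hasDerivAt_sinh x).div (Real.hasDerivAt_cosh x) hc
  have heq : Real.tanh = fun y => Real.sinh y / Real.cosh y :=
    funext fun y => Real.tanh_eq_sinh_div_cosh y
  rw [heq]
  refine h.congr_deriv (Eq.symm ?_)
  have hcs := Real.cosh_sq_sub_sinh_sq x
  field_simp

lemma my_tanh_arctanh {u : ℝ} (h : |u| < 1) : Real.tanh (arctanh u) = u := by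
  obtain ⟨h1, h2⟩ := abs_lt.1 h
  have hu1 : 0 < 1 - u := by linarith
  have hu2 : 0 < 1 + u := by linarith
  have ha : 0 < (1 + u) / (1 - u) := div_pos hu2 hu1
  have hexp : Real.exp (2 * arctanh u) = (1 + u) / (1 - u) := by
    rw [arctanh, show 2 * (1 / 2 * Real.log ((1 + u) / (1 - u))) =
      Real.log ((1 + u) / (1 - u)) by ring, Real.exp_log ha]
  set x := arctanh u
  have hx := Real.exp_ne_zero x
  have key : Real.tanh x = (Real.exp (2 * x) - 1) / (Real.exp (2 * x) + 1) := by
    rw [Real.tanh_eq_sinh_div_cosh, Real.sinh_eq, Real.cosh_eq,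
      show (2 : ℝ) * x = x + x by ring, Real.exp_add, Real.exp_neg]
    have hpos : 0 < Real.exp x * Real.exp x + 1 := by positivity
    field_simp
  rw [key, hexp]
  rw [div_sub' hu1.ne', div_add' _ _ _ hu1.ne']
  rw [div_div_div_cancel_right₀]
  · field_simp
    ring
  · exact hu1.ne'

lemma tanhFormula_hasDerivAt (y₀ s c : ℝ) (hs : 0 < s)
    (hd : 0 ≤ (1 - 1 / s) ^ 2 - 4 * c / s) (t : ℝ) :
    HasDerivAt (tanhFormula y₀ s c)
      ((s - 1) * tanhFormula y₀ s c t - s * tanhFormula y₀ s c t ^ 2 - c) t := by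
  have hs' : s ≠ 0 := hs.ne'
  set Ξ := Real.sqrt ((1 - 1 / s) ^ 2 - 4 * c / s) with hΞdef
  have hΞ : Ξ ^ 2 = (1 - 1 / s) ^ 2 - 4 * c / s := Real.sq_sqrt hd
  set Ω := arctanh ((2 * y₀ - (1 - 1 / s)) / Ξ) with hΩdef
  have h1 : HasDerivAt (fun t : ℝ => s * Ξ / 2 * t + Ω) (s * Ξ / 2) t := by
    simpa using ((hasDerivAt_id t).const_mul (s * Ξ / 2)).add_const Ω
  have h2 := (my_hasDerivAt_tanh (s * Ξ / 2 * t + Ω)).comp t h1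
  have h3 := (h2.const_mul (Ξ / 2)).const_add (1 / 2 * (1 - 1 / s))
  have hfun : tanhFormula y₀ s c = fun t : ℝ =>
      1 / 2 * (1 - 1 / s) + Ξ / 2 * (Real.tanh ∘ fun t : ℝ => s * Ξ / 2 * t + Ω) t := rfl
  rw [hfun]
  refine h3.congr_deriv (Eq.symm ?_)
  set τ := (Real.tanh ∘ fun t : ℝ => s * Ξ / 2 * t + Ω) t with hτdef
  show (s - 1) * tanhFormula y₀ s c t - s * tanhFormula y₀ s c t ^ 2 - c
      = Ξ / 2 * ((1 - τ ^ 2) * (s * Ξ / 2))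
  have hT : tanhFormula y₀ s c t = 1 / 2 * (1 - 1 / s) + Ξ / 2 * τ := rfl
  rw [hT]
  have hΞ2 : s ^ 2 * Ξ ^ 2 = (s - 1) ^ 2 - 4 * c * s := by
    rw [hΞ]; field_simp
  field_simp
  nlinarith [hΞ2, sq_nonneg τ, sq_nonneg Ξ]

/-- If the remainder `Ψ` is bounded above by `c_U` on `[t₁, t₂]` and `y` solves
`y' = (s-1)y - sy² - Ψ(t)` there with `y(t₁) = y₀`, then
`y(t) ≥ T(t - t₁ | y₀, s, c_U)` on `[t₁, t₂]`. -/
theorem prevalence_lower_bound (s cU y₀ t₁ t₂ : ℝ) (hs : 0 < s)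
    (hdisc : 0 < (1 - 1 / s) ^ 2 - 4 * cU / s)
    (hy₀ : |2 * y₀ - (1 - 1 / s)| < Real.sqrt ((1 - 1 / s) ^ 2 - 4 * cU / s))
    (ht : t₁ < t₂) (Ψ : ℝ → ℝ) (hΨcont : Continuous Ψ)
    (hΨ : ∀ t ∈ Set.Icc t₁ t₂, Ψ t ≤ cU)
    (y : ℝ → ℝ) (hinit : y t₁ = y₀)
    (hode : ∀ t ∈ Set.Icc t₁ t₂,
      HasDerivWithinAt y ((s - 1) * y t - s * (y t) ^ 2 - Ψ t) (Set.Icc t₁ t₂) t) :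
    ∀ t ∈ Set.Icc t₁ t₂, tanhFormula y₀ s cU (t - t₁) ≤ y t := by
  have hs' : s ≠ 0 := hs.ne'
  have hΞpos : 0 < Real.sqrt ((1 - 1 / s) ^ 2 - 4 * cU / s) := Real.sqrt_pos.2 hdisc
  -- T(0) = y₀
  have hT0 : tanhFormula y₀ s cU 0 = y₀ := by
    have habs : |(2 * y₀ - (1 - 1 / s)) / Real.sqrt ((1 - 1 / s) ^ 2 - 4 * cU / s)| < 1 := by
      rw [abs_div, abs_of_pos hΞpos]
      exact (div_lt_one hΞpos).2 hy₀
    rw [tanhFormula, mul_zero, zero_add, my_tanh_arctanh habs]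
    generalize Real.sqrt ((1 - 1 / s) ^ 2 - 4 * cU / s) = Ξ at hΞpos ⊢
    field_simp [hΞpos.ne']
    ring
  set T : ℝ → ℝ := fun x => tanhFormula y₀ s cU (x - t₁) with hTdef
  have hTderiv : ∀ x, HasDerivAt T ((s - 1) * T x - s * T x ^ 2 - cU) x := by
    intro x
    have h := (tanhFormula_hasDerivAt y₀ s cU hs hdisc.le (x - t₁)).comp x
      ((hasDerivAt_id x).sub_const t₁)
    exact h.congr_deriv (mul_one _)
  have hTcont : Continuous T := by
    rw [continuous_iff_continuousAt]; exact fun x => (hTderiv x).continuousAt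
  have hycont : ContinuousOn y (Set.Icc t₁ t₂) := fun x hx => (hode x hx).continuousWithinAt
  obtain ⟨M, hM⟩ := isCompact_Icc.exists_bound_of_continuousOn (hycont.add hTcont.continuousOn)
  have hM0 : 0 ≤ M := le_trans (norm_nonneg _) (hM t₁ ⟨le_rfl, ht.le⟩)
  set L := s * M + |s - 1| + 1 with hLdef
  have key : ∀ ε > 0, ∀ t ∈ Set.Icc t₁ t₂, T t - ε * Real.exp (L * (t - t₁)) ≤ y t := by
    intro ε hε
    set f : ℝ → ℝ := fun x => T x - ε * Real.exp (L * (x - t₁)) with hfdef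
    set f' : ℝ → ℝ := fun x =>
      ((s - 1) * T x - s * T x ^ 2 - cU) - ε * (Real.exp (L * (x - t₁)) * L) with hf'def
    have hfderiv : ∀ x, HasDerivAt f (f' x) x := by
      intro x
      have he : HasDerivAt (fun x : ℝ => Real.exp (L * (x - t₁)))
          (Real.exp (L * (x - t₁)) * L) x := by
        have : HasDerivAt (fun x : ℝ => L * (x - t₁)) L x := by
          simpa using ((hasDerivAt_id x).sub_const t₁).const_mul L
        simpa using this.exp
      exact (hTderiv x).sub (he.const_mul ε)
    have hfcont : ContinuousOn f (Set.Icc t₁ t₂) := by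
      apply Continuous.continuousOn
      rw [continuous_iff_continuousAt]; exact fun x => (hfderiv x).continuousAt
    have ha : f t₁ ≤ y t₁ := by
      simp only [hfdef, sub_self, mul_zero, Real.exp_zero, mul_one, hTdef, hT0, hinit]
      linarith
    refine fun t htmem => image_le_of_deriv_right_lt_deriv_boundary' (f := f) (f' := f')
      (B := y) (B' := fun x => (s - 1) * y x - s * y x ^ 2 - Ψ x) hfcont
      (fun x hx => (hfderiv x).hasDerivWithinAt) ha hycont
      (fun x hx => (hode x (Set.Ico_subset_Icc_self hx)).mono_of_mem_nhdsWithin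
        (Icc_mem_nhdsGE_of_mem hx)) ?_ htmem
    intro x hx heq
    have hxI : x ∈ Set.Icc t₁ t₂ := Set.Ico_subset_Icc_self hx
    have hΨx : Ψ x ≤ cU := hΨ x hxI
    have hMx : |y x + T x| ≤ M := by
      have := hM x hxI
      rwa [Real.norm_eq_abs] at this
    have hE : 0 < Real.exp (L * (x - t₁)) := Real.exp_pos _
    have hy_eq : y x = T x - ε * Real.exp (L * (x - t₁)) := heq.symm
    have habs1 : -(M) ≤ y x + T x := (abs_le.1 hMx).1
    have hsa : s - 1 ≤ |s - 1| := le_abs_self _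
    have hfac : 0 < L - (s - 1) + s * (y x + T x) := by
      have hsm : -(s * M) ≤ s * (y x + T x) := by nlinarith
      rw [hLdef]; nlinarith
    have hP : 0 < ε * Real.exp (L * (x - t₁)) := mul_pos hε hE
    have hkey : ((s - 1) * y x - s * y x ^ 2 - Ψ x)
        - (((s - 1) * T x - s * T x ^ 2 - cU) - ε * (Real.exp (L * (x - t₁)) * L))
        = ε * Real.exp (L * (x - t₁)) * (L - (s - 1) + s * (y x + T x)) + (cU - Ψ x) := by
      rw [hy_eq]; ring
    show ((s - 1) * T x - s * T x ^ 2 - cU) - ε * (Real.exp (L * (x - t₁)) * L)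
        < (s - 1) * y x - s * y x ^ 2 - Ψ x
    nlinarith [mul_pos hP hfac, hkey, hΨx]
  intro t htmem
  have hE : 0 < Real.exp (L * (t - t₁)) := Real.exp_pos _
  refine le_of_forall_pos_le_add fun ε' hε' => ?_
  have h := key (ε' / Real.exp (L * (t - t₁))) (div_pos hε' hE) t htmem
  rw [div_mul_cancel₀ _ hE.ne'] at h
  have : tanhFormula y₀ s cU (t - t₁) = T t := rfl
  linarith [h]
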